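/- arXiv:0807.1455 — 7 statements merged into one kernel-verified Lean document; each statement's English description precedes it below -/
import Mathlib

section
/- Let α ∈ 𝕋 = ℝ/ℤ, n ∈ ℕ with n ≥ 1, and d < 1/3. If ‖α‖ ≤ d, ‖2α‖ ≤ d, …, ‖nα‖ ≤ d, then ‖α‖ ≤ d/n. -/
/-- If `‖kα‖ ≤ d < 1/3` for `k = 1, …, n`, then `‖α‖ ≤ d/n`. -/
theorem stmt_2 (α : AddCircle (1 : ℝ)) (n : ℕ) (hn : 1 ≤ n) (d : ℝ)
    (hd0 : 0 ≤ d) (hd : d < 1 / 3)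
    (h : ∀ k : ℕ, 1 ≤ k → k ≤ n → ‖k • α‖ ≤ d) :
    ‖α‖ ≤ d / n := by
  -- choose a representative `a` of `α` with `|a| ≤ 1/2`
  obtain ⟨x⟩ := α
  replace h : ∀ k : ℕ, 1 ≤ k → k ≤ n → ‖k • (x : AddCircle (1 : ℝ))‖ ≤ d := h
  show ‖(x : AddCircle (1 : ℝ))‖ ≤ d / n
  set a : ℝ := x - round x with ha_def
  have hround : ((round x : ℝ) : AddCircle (1 : ℝ)) = 0 := by
    rw [AddCircle.coe_eq_zero_iff]
    exact ⟨round x, by simp⟩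
  have hαa : (x : AddCircle (1 : ℝ)) = (a : AddCircle (1 : ℝ)) := by
    have : (x : AddCircle (1 : ℝ)) - (a : AddCircle (1 : ℝ))
        = ((round x : ℝ) : AddCircle (1 : ℝ)) := by
      rw [← QuotientAddGroup.mk_sub]
      norm_num [ha_def]
    have h0 := this.trans hround
    linear_combination (norm := abel) h0
  have ha2 : |a| ≤ 1 / 2 := abs_sub_round x
  have hnorm : ∀ y : ℝ, |y| ≤ 1 / 2 → ‖(y : AddCircle (1 : ℝ))‖ = |y| := by
    intro y hy
    rw [AddCircle.norm_coe_eq_abs_iff (1 : ℝ) one_ne_zero]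
    simpa using hy
  have hsmul : ∀ k : ℕ, (k : ℕ) • (x : AddCircle (1 : ℝ))
      = (((k : ℝ) * a : ℝ) : AddCircle (1 : ℝ)) := by
    intro k
    rw [hαa, ← AddCircle.coe_nsmul]
    norm_num [nsmul_eq_mul]
  -- `|a| ≤ d` from `k = 1`
  have h1 : |a| ≤ d := by
    have := h 1 le_rfl hn
    rw [hsmul 1] at this
    simpa [hnorm a ha2] using this
  -- key induction: `k * |a| ≤ d` for `1 ≤ k ≤ n`
  have key : ∀ k : ℕ, 1 ≤ k → k ≤ n → (k : ℝ) * |a| ≤ d := by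
    intro k
    induction k with
    | zero => omega
    | succ k ih =>
      intro _ hkn
      rcases Nat.eq_zero_or_pos k with rfl | hk
      · simpa using h1
      have hka : (k : ℝ) * |a| ≤ d := ih hk (le_trans (Nat.le_succ k) hkn)
      set t : ℝ := ((k + 1 : ℕ) : ℝ) * |a| with ht_def
      have ht2 : t ≤ 2 * d := by
        have : t = (k : ℝ) * |a| + |a| := by push_cast [ht_def]; ring
        rw [this]; linarith
      by_contra hcon
      push_neg at hcon
      have ht0 : 0 ≤ t := by positivity
      have hlt : d < t := hcon
      -- either `t ≤ 1/2` (then norm is `t > d`, contradiction) or `1/2 < t < 1`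
      have hnk := h (k + 1) (by omega) hkn
      rw [hsmul (k + 1)] at hnk
      have habs : |((k + 1 : ℕ) : ℝ) * a| = t := by
        rw [ht_def, abs_mul, abs_of_nonneg (by positivity : (0:ℝ) ≤ ((k + 1 : ℕ) : ℝ))]
      by_cases hhalf : t ≤ 1 / 2
      · rw [AddCircle.norm_coe_eq_abs_iff (1 : ℝ) one_ne_zero |>.mpr (by
          rw [habs]; simpa using hhalf), habs] at hnk
        linarith
      · push_neg at hhalf
        have ht1 : t < 1 := by linarith
        have hnt : ‖((t : ℝ) : AddCircle (1 : ℝ))‖ = 1 - t := by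
          rw [AddCircle.norm_eq]
          have hr : round ((1 : ℝ)⁻¹ * t) = 1 := by
            rw [inv_one, one_mul, round_eq]
            rw [show (1 : ℤ) = ⌊(t + 1 / 2 : ℝ)⌋ from
              ((Int.floor_eq_iff).mpr ⟨by push_cast; linarith, by push_cast; linarith⟩).symm]
          rw [hr]
          push_cast
          rw [abs_of_nonpos (by linarith)]
          ring
        have hnormval : ‖((((k + 1 : ℕ) : ℝ) * a : ℝ) : AddCircle (1 : ℝ))‖ = 1 - t := by
          rcases abs_cases (((k + 1 : ℕ) : ℝ) * a) with ⟨he, _⟩ | ⟨he, _⟩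
          · rw [show (((k + 1 : ℕ) : ℝ) * a) = t by rw [← habs, he]]
            exact hnt
          · have hv : (((k + 1 : ℕ) : ℝ) * a) = -t := by rw [← habs]; linarith
            rw [hv, show ((-t : ℝ) : AddCircle (1 : ℝ)) = -((t : ℝ) : AddCircle (1 : ℝ)) from
              QuotientAddGroup.mk_neg _ _, norm_neg]
            exact hnt
        rw [hnormval] at hnk
        linarith
  -- conclude
  have hfinal : (n : ℝ) * |a| ≤ d := key n hn le_rfl
  have hnpos : (0 : ℝ) < n := by exact_mod_cast hn
  have : ‖(x : AddCircle (1 : ℝ))‖ = |a| := by rw [hαa]; exact hnorm a ha2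
  rw [this, le_div_iff₀ hnpos]
  linarith [mul_comm (n : ℝ) |a|]
end

section
/- Suppose every countable subgroup of 𝕋 admits a characterizing sequence, i.e., for every countable G ≤ 𝕋 there is A ⊆ ℕ with {β ∈ 𝕋 : lim_{n∈A,n→∞} ‖nβ‖ = 0} = G. Then every subgroup G of 𝕋 is characterized by a filter: there exists a filter F on ℕ such that for all β ∈ 𝕋, β ∈ G if and only if {n : ‖nβ‖ ≤ ε} ∈ F for all ε > 0. -/
open Filter Set

/-- The coerced set of the additive closure of a countable set is countable. -/
lemma countable_addClosure {α : Type*} [AddGroup α] {C : Set α} (hC : C.Countable) :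
    ((AddSubgroup.closure C : AddSubgroup α) : Set α).Countable := by
  set D : Set α := C ∪ -C with hD
  have hDc : D.Countable := hC.union (hC.preimage neg_injective)
  haveI := hDc.to_subtype
  have : ((AddSubgroup.closure C : AddSubgroup α) : Set α) ⊆
      Set.range (fun l : List D => (l.map Subtype.val).sum) := by
    intro x hx
    have hx' : x ∈ AddSubmonoid.closure D := by
      rw [hD, ← AddSubgroup.closure_toAddSubmonoid]
      exact hx
    obtain ⟨l, hl, hsum⟩ := AddSubmonoid.exists_list_of_mem_closure hx'
    refine ⟨l.pmap (fun a ha => (⟨a, ha⟩ : D)) hl, ?_⟩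
    have heq : List.map Subtype.val (l.pmap (fun a ha => (⟨a, ha⟩ : D)) hl) = l := by
      simp [List.map_pmap]
    show (List.map Subtype.val (l.pmap (fun a ha => (⟨a, ha⟩ : D)) hl)).sum = x
    rw [heq, hsum]
  exact (Set.countable_range _).mono this

/-- If every countable subgroup of `𝕋` admits a characterizing sequence, then every
subgroup of `𝕋` is characterized by a filter on `ℕ`. -/
theorem stmt_6
    (h : ∀ G : AddSubgroup (AddCircle (1 : ℝ)), (G : Set (AddCircle (1 : ℝ))).Countable →
      ∃ A : Set ℕ,
        {β : AddCircle (1 : ℝ) | Filter.Tendsto (fun n : ℕ => ‖n • β‖)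
          (Filter.atTop ⊓ Filter.principal A) (nhds 0)} = (G : Set (AddCircle (1 : ℝ)))) :
    ∀ G : AddSubgroup (AddCircle (1 : ℝ)),
      ∃ F : Filter ℕ, ∀ β : AddCircle (1 : ℝ),
        β ∈ G ↔ ∀ ε : ℝ, 0 < ε → {n : ℕ | ‖n • β‖ ≤ ε} ∈ F := by
  intro G
  set gens : Set (Set ℕ) :=
    {S | ∃ γ ∈ G, ∃ ε : ℝ, 0 < ε ∧ S = {n : ℕ | ‖n • γ‖ ≤ ε}} with hgens
  refine ⟨Filter.generate gens, fun β => ?_⟩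
  constructor
  · intro hβ ε hε
    exact Filter.mem_generate_of_mem ⟨β, hβ, ε, hε, rfl⟩
  · intro hβ
    by_contra hβG
    have hw : ∀ k : ℕ, ∃ t : Set (Set ℕ), t ⊆ gens ∧ t.Finite ∧
        ⋂₀ t ⊆ {n : ℕ | ‖n • β‖ ≤ 1 / (k + 1)} := by
      intro k
      have := hβ (1 / (k + 1)) (by positivity)
      exact Filter.mem_generate_iff.mp this
    choose t ht htf hsub using hw
    have hch : ∀ k : ℕ, ∀ s : Set ℕ, s ∈ t k →
        ∃ γ, γ ∈ G ∧ ∃ ε : ℝ, 0 < ε ∧ s = {n : ℕ | ‖n • γ‖ ≤ ε} := by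
      intro k s hs
      obtain ⟨γ, hγ, ε, hε, hse⟩ := ht k hs
      exact ⟨γ, hγ, ε, hε, hse⟩
    choose γ hγG ε hε hse using hch
    -- the countable set of all chosen γ's
    set C : Set (AddCircle (1 : ℝ)) :=
      ⋃ k : ℕ, Set.range (fun p : {s // s ∈ t k} => γ k p.1 p.2) with hCdef
    have hCc : C.Countable := by
      refine Set.countable_iUnion fun k => ?_
      haveI := (htf k).to_subtype
      exact Set.countable_range _
    set H : AddSubgroup (AddCircle (1 : ℝ)) := AddSubgroup.closure C with hHdef
    have hHG : H ≤ G := by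
      rw [hHdef]
      refine (AddSubgroup.closure_le _).mpr ?_
      rintro x hx
      simp only [hCdef, Set.mem_iUnion, Set.mem_range] at hx
      obtain ⟨k, p, rfl⟩ := hx
      exact hγG k p.1 p.2
    obtain ⟨A, hA⟩ := h H (countable_addClosure hCc)
    set L : Filter ℕ := Filter.atTop ⊓ Filter.principal A with hL
    -- each generator set containing a chosen γ is in L
    have hmem : ∀ k : ℕ, ∀ s : Set ℕ, (hs : s ∈ t k) → s ∈ L := by
      intro k s hs
      have hγH : γ k s hs ∈ H := by
        apply AddSubgroup.subset_closure
        exact Set.mem_iUnion.mpr ⟨k, ⟨⟨s, hs⟩, rfl⟩⟩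
      have htend : Filter.Tendsto (fun n : ℕ => ‖n • γ k s hs‖) L (nhds 0) := by
        have : γ k s hs ∈ {β : AddCircle (1 : ℝ) | Filter.Tendsto (fun n : ℕ => ‖n • β‖)
            (Filter.atTop ⊓ Filter.principal A) (nhds 0)} := by
          rw [hA]; exact hγH
        exact this
      have := htend (Iic_mem_nhds (hε k s hs))
      rw [hse k s hs]
      exact this
    have hkey : ∀ k : ℕ, {n : ℕ | ‖n • β‖ ≤ 1 / (k + 1)} ∈ L := by
      intro k
      refine Filter.mem_of_superset ?_ (hsub k)
      exact (Filter.sInter_mem (htf k)).mpr (fun s hs => hmem k s hs)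
    have hβtend : Filter.Tendsto (fun n : ℕ => ‖n • β‖) L (nhds 0) := by
      rw [Metric.tendsto_nhds]
      intro δ hδ
      obtain ⟨k, hk⟩ := exists_nat_one_div_lt hδ
      refine Filter.mem_of_superset (hkey k) ?_
      intro n hn
      simp only [Set.mem_setOf_eq] at hn ⊢
      rw [Real.dist_eq, sub_zero, abs_of_nonneg (norm_nonneg _)]
      exact lt_of_le_of_lt hn (by exact_mod_cast hk)
    have : β ∈ H := by
      rw [← SetLike.mem_coe, ← hA]
      exact hβtend
    exact hβG (hHG this)
end

section
/- Let α₁, …, α_t ∈ 𝕋 and ε > 0. The set {β ∈ 𝕋 : ‖nβ‖ ≤ 1/6 for all n in the Bohr set H_ε(α₁,…,α_t)} is finite, and there exists a positive integer M such that this set is contained in ⟨α₁,…,α_t⟩_M = {k₁α₁ + ⋯ + k_tα_t : |k₁|,…,|k_t| ≤ M}. -/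
open Complex Finset Filter Topology

noncomputable def ec (x : ℝ) : ℂ := Complex.exp ((2 * Real.pi * x : ℝ) * Complex.I)

lemma ec_add (x y : ℝ) : ec (x + y) = ec x * ec y := by
  rw [ec, ec, ec, ← Complex.exp_add]
  congr 1
  push_cast
  ring

lemma ec_ne_zero (x : ℝ) : ec x ≠ 0 := Complex.exp_ne_zero _

lemma abs_ec (x : ℝ) : ‖ec x‖ = 1 := by
  rw [ec, Complex.norm_exp]
  simp

lemma ec_pow (x : ℝ) (n : ℕ) : ec x ^ n = ec (n * x) := by
  rw [ec, ec, ← Complex.exp_nat_mul]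
  congr 1
  push_cast
  ring

lemma ec_zpow (x : ℝ) (c : ℤ) : ec x ^ c = ec (c * x) := by
  rw [ec, ec, ← Complex.exp_int_mul]
  congr 1
  push_cast
  ring

lemma ec_eq_one_iff (x : ℝ) : ec x = 1 ↔ ∃ z : ℤ, x = z := by
  rw [ec, Complex.exp_eq_one_iff]
  constructor
  · rintro ⟨n, hn⟩
    refine ⟨n, ?_⟩
    have h2 : ((2 * Real.pi * x : ℝ) : ℂ) = ((2 * Real.pi * n : ℝ) : ℂ) := by
      have hI : (Complex.I : ℂ) ≠ 0 := Complex.I_ne_zero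
      have hn2 : (((2 * Real.pi * x : ℝ) : ℂ)) * Complex.I = (((2 * Real.pi * n : ℝ)):ℂ) * Complex.I := by
        push_cast at hn ⊢
        linear_combination hn
      exact mul_right_cancel₀ hI hn2
    have h3 : (2 * Real.pi * x : ℝ) = 2 * Real.pi * n := by exact_mod_cast h2
    have hpi : (2 * Real.pi : ℝ) ≠ 0 := by positivity
    nlinarith [Real.pi_pos]
  · rintro ⟨z, rfl⟩
    exact ⟨z, by push_cast; ring⟩

lemma ec_re (x : ℝ) : (ec x).re = Real.cos (2 * Real.pi * x) := by
  rw [ec, Complex.exp_ofReal_mul_I_re]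

lemma ec_im (x : ℝ) : (ec x).im = Real.sin (2 * Real.pi * x) := by
  rw [ec, Complex.exp_ofReal_mul_I_im]

lemma conj_ec (x : ℝ) : (starRingEnd ℂ) (ec x) = (ec x)⁻¹ := by
  rw [ec, ← Complex.exp_conj, ← Complex.exp_neg]
  congr 1
  rw [map_mul, Complex.conj_I, Complex.conj_ofReal]
  ring

lemma normSq_ec_sub_one (x : ℝ) :
    Complex.normSq (ec x - 1) = 2 - 2 * Real.cos (2 * Real.pi * x) := by
  rw [Complex.normSq_apply]
  simp only [Complex.sub_re, Complex.sub_im, Complex.one_re, Complex.one_im, ec_re, ec_im]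
  have h := Real.sin_sq_add_cos_sq (2 * Real.pi * x)
  nlinarith [h]



lemma norm_coe_unit (x : ℝ) : ‖(x : AddCircle (1:ℝ))‖ = |x - round x| := by
  rw [AddCircle.norm_eq]
  norm_num

lemma cos_norm_eq (x : ℝ) :
    Real.cos (2 * Real.pi * x) = Real.cos (|2 * Real.pi * (x - round x)|) := by
  have hx : 2 * Real.pi * x = 2 * Real.pi * (x - round x) + (round x) * (2 * Real.pi) := by
    push_cast; ring
  rw [hx, Real.cos_add_int_mul_two_pi, Real.cos_abs]

lemma cos_ge_of_norm_le {x : ℝ} (h : ‖(x : AddCircle (1:ℝ))‖ ≤ 1/6) :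
    1/2 ≤ Real.cos (2 * Real.pi * x) := by
  rw [norm_coe_unit] at h
  rw [cos_norm_eq]
  have hr : |x - round x| ≤ 1/6 := h
  have h1 : |2 * Real.pi * (x - round x)| ≤ Real.pi / 3 := by
    rw [abs_mul, _root_.abs_of_nonneg (by positivity : (0:ℝ) ≤ 2 * Real.pi)]
    nlinarith [Real.pi_pos]
  have := Real.cos_le_cos_of_nonneg_of_le_pi (abs_nonneg (2 * Real.pi * (x - round x)))
    (by nlinarith [Real.pi_pos] : Real.pi / 3 ≤ Real.pi) h1
  rw [Real.cos_pi_div_three] at this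
  exact this

lemma cos_le_of_norm_ge {x ε₀ : ℝ} (h0 : 0 < ε₀) (h1 : ε₀ ≤ 1/2)
    (h : ε₀ ≤ ‖(x : AddCircle (1:ℝ))‖) :
    Real.cos (2 * Real.pi * x) ≤ Real.cos (2 * Real.pi * ε₀) := by
  rw [norm_coe_unit] at h
  rw [cos_norm_eq]
  have hr2 : |x - round x| ≤ 1/2 := abs_sub_round x
  have key : 2 * Real.pi * ε₀ ≤ |2 * Real.pi * (x - round x)| := by
    rw [abs_mul, _root_.abs_of_nonneg (by positivity : (0:ℝ) ≤ 2 * Real.pi)]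
    nlinarith [Real.pi_pos]
  have hy : |2 * Real.pi * (x - round x)| ≤ Real.pi := by
    rw [abs_mul, _root_.abs_of_nonneg (by positivity : (0:ℝ) ≤ 2 * Real.pi)]
    nlinarith [Real.pi_pos]
  exact Real.cos_le_cos_of_nonneg_of_le_pi (by positivity) hy key

lemma cos_eps_lt_one {ε₀ : ℝ} (h0 : 0 < ε₀) (h1 : ε₀ ≤ 1/2) :
    Real.cos (2 * Real.pi * ε₀) < 1 := by
  rcases lt_or_eq_of_le (Real.cos_le_one (2 * Real.pi * ε₀)) with h | h
  · exact h
  · exfalso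
    rcases (Real.cos_eq_one_iff _).mp h with ⟨n, hn⟩
    have hne : (n : ℝ) = ε₀ := by
      have hpi : (0:ℝ) < 2 * Real.pi := by positivity
      nlinarith [Real.pi_pos]
    rcases le_or_gt n 0 with hn0 | hn0
    · have : (n:ℝ) ≤ 0 := by exact_mod_cast hn0
      linarith
    · have : (1:ℝ) ≤ (n:ℝ) := by exact_mod_cast hn0
      linarith

lemma tendsto_avg_pow (ζ : ℂ) (hζ : ‖ζ‖ = 1) :
    Tendsto (fun N : ℕ => (N:ℂ)⁻¹ * ∑ n ∈ range N, ζ ^ n) atTop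
      (nhds (if ζ = 1 then 1 else 0)) := by
  by_cases h1 : ζ = 1
  · simp only [h1, one_pow, sum_const, card_range, nsmul_eq_mul, mul_one, if_true]
    refine Tendsto.congr' ?_ (tendsto_const_nhds : Tendsto (fun _ : ℕ => (1:ℂ)) atTop _)
    filter_upwards [eventually_ne_atTop 0] with N hN
    have : (N:ℂ) ≠ 0 := Nat.cast_ne_zero.mpr hN
    field_simp
  · simp only [h1, if_false]
    have hd : (0:ℝ) < ‖ζ - 1‖ := by
      rw [norm_pos_iff]
      exact sub_ne_zero.mpr h1
    refine squeeze_zero_norm (f := fun N : ℕ => (N:ℂ)⁻¹ * ∑ n ∈ range N, ζ ^ n)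
      (a := fun N : ℕ => (N:ℝ)⁻¹ * (2 / ‖ζ - 1‖)) ?_ ?_
    · intro N
      rw [norm_mul, norm_inv, Complex.norm_natCast]
      refine mul_le_mul_of_nonneg_left ?_ (by positivity)
      have hgs := geom_sum_mul ζ N
      have habs : ‖(∑ i ∈ range N, ζ ^ i) * (ζ - 1)‖ = ‖ζ^N - 1‖ := by
        rw [hgs]
      rw [norm_mul] at habs
      have hb : ‖ζ^N - 1‖ ≤ 2 := by
        calc ‖ζ^N - 1‖ ≤ ‖ζ^N‖ + ‖(1:ℂ)‖ := by
              simpa using norm_sub_le (ζ^N) 1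
        _ ≤ 2 := by rw [norm_pow, hζ, one_pow]; norm_num
      rw [le_div_iff₀ hd]
      rw [habs]; exact hb
    · have := tendsto_inv_atTop_nhds_zero_nat.mul_const (2 / ‖ζ - 1‖)
      simpa using this

lemma count_kernel (s m : ℕ) (hs : 1 ≤ s) (hm : 1 ≤ m) :
    ((m:ℝ)^(2*s)) / ((s:ℝ) * m) ≤
      (((univ : Finset ((Fin s → Fin m) × (Fin s → Fin m))).filter (fun q =>
        (∑ i, ((q.1 i : ℕ))) = ∑ i, ((q.2 i : ℕ)))).card : ℝ) := by
  classical
  set F : (Fin s → Fin m) → ℕ := fun v => ∑ i, (v i : ℕ) with hF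
  set K := s * m with hK
  have hFlt : ∀ v, F v ∈ range K := by
    intro v
    rw [mem_range]
    have : F v ≤ ∑ _i : Fin s, (m - 1) := by
      apply Finset.sum_le_sum
      intro i _
      exact Nat.le_sub_one_of_lt (v i).isLt
    simp only [sum_const, card_univ, Fintype.card_fin, smul_eq_mul] at this
    calc F v ≤ s * (m-1) := this
    _ < s * m := by
      have he : s * (m-1) + s * 1 = s * m := by
        rw [← Nat.mul_add]
        congr 1
        omega
      omega
  set g : ℕ → ℕ := fun n => ((univ : Finset (Fin s → Fin m)).filter (fun v => F v = n)).card with hg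
  have h1 : ∑ n ∈ range K, g n = m ^ s := by
    rw [← Finset.card_eq_sum_card_fiberwise (fun v _ => hFlt v)]
    simp [Fintype.card_fun]
  have h2 : (((univ : Finset ((Fin s → Fin m) × (Fin s → Fin m))).filter (fun q =>
        F q.1 = F q.2)).card : ℕ) = ∑ n ∈ range K, (g n)^2 := by
    rw [Finset.card_eq_sum_card_fiberwise (f := fun q => F q.1) (t := range K)
      (fun q _ => hFlt q.1)]
    apply Finset.sum_congr rfl
    intro n _
    have hset : ((univ : Finset ((Fin s → Fin m) × (Fin s → Fin m))).filter (fun q =>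
        F q.1 = F q.2)).filter (fun q => F q.1 = n) =
        ((univ : Finset (Fin s → Fin m)).filter (fun v => F v = n)) ×ˢ
        ((univ : Finset (Fin s → Fin m)).filter (fun v => F v = n)) := by
      ext q
      simp only [mem_filter, mem_product, mem_univ, true_and]
      constructor
      · rintro ⟨h12, hn⟩
        exact ⟨hn, h12 ▸ hn⟩
      · rintro ⟨ha, hb⟩
        exact ⟨ha.trans hb.symm, ha⟩
    rw [hset, Finset.card_product]
    ring
  have hcs : ((∑ n ∈ range K, (g n : ℝ)))^2 ≤ (K : ℝ) * ∑ n ∈ range K, (g n : ℝ)^2 := by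
    have := sq_sum_le_card_mul_sum_sq (s := range K) (f := fun n => (g n : ℝ))
    simpa using this
  have hKpos : (0:ℝ) < (s:ℝ) * m := by
    have : 0 < s * m := Nat.mul_pos (by omega) (by omega)
    exact_mod_cast this
  rw [div_le_iff₀ hKpos]
  have e1 : (∑ n ∈ range K, (g n : ℝ)) = (m:ℝ)^s := by
    rw [← Nat.cast_sum]
    rw [h1]
    push_cast
    ring
  have e2 : (∑ n ∈ range K, (g n : ℝ)^2) = ((((univ : Finset ((Fin s → Fin m) × (Fin s → Fin m))).filter (fun q =>
        F q.1 = F q.2)).card : ℕ) : ℝ) := by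
    rw [h2]
    push_cast
    ring
  rw [e1, e2] at hcs
  calc (m:ℝ)^(2*s) = ((m:ℝ)^s)^2 := by rw [← pow_mul]; ring_nf
  _ ≤ (K:ℝ) * _ := hcs
  _ = _ := by rw [hK]; push_cast; ring





lemma ec_zero : ec 0 = 1 := by
  rw [ec]
  norm_num

lemma ec_sum {ι : Type*} (s : Finset ι) (f : ι → ℝ) :
    ec (∑ i ∈ s, f i) = ∏ i ∈ s, ec (f i) := by
  classical
  induction s using Finset.induction_on with
  | empty => simpa using ec_zero
  | insert _ _ h ih =>
    rw [Finset.sum_insert h, Finset.prod_insert h, ec_add, ih]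

noncomputable def Dk (m : ℕ) (x : ℝ) : ℂ := ∑ i ∈ Finset.range m, ec x ^ i

def κf (s m : ℕ) (q : (Fin s → Fin m) × (Fin s → Fin m)) : ℤ :=
  (∑ i, ((q.1 i : ℕ) : ℤ)) - ∑ i, ((q.2 i : ℕ) : ℤ)

lemma abs_κf_le (s m : ℕ) (q : (Fin s → Fin m) × (Fin s → Fin m)) :
    |κf s m q| ≤ (s : ℤ) * m := by
  have hb : ∀ v : Fin s → Fin m, (0 ≤ ∑ i, ((v i : ℕ) : ℤ)) ∧
      (∑ i, ((v i : ℕ) : ℤ)) ≤ (s:ℤ) * m := by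
    intro v
    constructor
    · exact Finset.sum_nonneg fun i _ => by positivity
    · calc (∑ i, ((v i : ℕ) : ℤ)) ≤ ∑ _i : Fin s, (m : ℤ) := by
            apply Finset.sum_le_sum
            intro i _
            exact_mod_cast (v i).isLt.le
      _ = (s:ℤ) * m := by simp [mul_comm]
  rcases hb q.1 with ⟨h1, h2⟩
  rcases hb q.2 with ⟨h3, h4⟩
  rw [κf, abs_sub_le_iff]
  omega

lemma expandA (s m : ℕ) (x : ℝ) :
    ((Complex.normSq (Dk m x) ^ s : ℝ) : ℂ) =
      ∑ q : (Fin s → Fin m) × (Fin s → Fin m), ec x ^ (κf s m q) := by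
  classical
  have hpow : ∀ (w : ℂ), w ≠ 0 → (∑ i ∈ Finset.range m, w ^ i) ^ s
      = ∑ v : Fin s → Fin m, w ^ (∑ i, ((v i : ℕ))) := by
    intro w _
    rw [← Fin.sum_univ_eq_sum_range (fun i => w ^ i) m]
    calc (∑ i : Fin m, w ^ (i:ℕ)) ^ s
        = ∏ _k : Fin s, ∑ i : Fin m, w ^ (i:ℕ) := by
          rw [Finset.prod_const, Finset.card_univ, Fintype.card_fin]
      _ = ∑ v ∈ Fintype.piFinset (fun _ : Fin s => (Finset.univ : Finset (Fin m))),
            ∏ k : Fin s, w ^ ((v k : ℕ)) := Finset.prod_univ_sum _ _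
      _ = ∑ v : Fin s → Fin m, w ^ (∑ i, ((v i : ℕ))) := by
          rw [Fintype.piFinset_univ]
          exact Finset.sum_congr rfl fun v _ => Finset.prod_pow_eq_pow_sum _ _ _
  have hconj : (starRingEnd ℂ) (Dk m x) = ∑ i ∈ Finset.range m, ((ec x)⁻¹) ^ i := by
    rw [Dk, map_sum]
    exact Finset.sum_congr rfl fun i _ => by rw [map_pow, conj_ec]
  have hns : ((Complex.normSq (Dk m x) ^ s : ℝ) : ℂ)
      = (Dk m x) ^ s * ((starRingEnd ℂ) (Dk m x)) ^ s := by
    push_cast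
    rw [← Complex.mul_conj]
    ring
  rw [hns, hconj, Dk, hpow (ec x) (ec_ne_zero x),
    hpow ((ec x)⁻¹) (inv_ne_zero (ec_ne_zero x)), Finset.sum_mul_sum]
  rw [show (∑ q : (Fin s → Fin m) × (Fin s → Fin m), ec x ^ κf s m q)
      = ∑ v : Fin s → Fin m, ∑ w : Fin s → Fin m, ec x ^ κf s m (v, w) from
      Fintype.sum_prod_type _]
  apply Finset.sum_congr rfl
  intro v _
  apply Finset.sum_congr rfl
  intro w _
  rw [κf]
  simp only
  rw [← zpow_natCast (ec x) (∑ i, ((v i : ℕ))), ← zpow_natCast ((ec x)⁻¹) (∑ i, ((w i : ℕ))),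
    inv_zpow, ← zpow_neg, ← zpow_add₀ (ec_ne_zero x)]
  congr 1
  push_cast
  ring

lemma normSq_Dk_le (m : ℕ) (x : ℝ) : Complex.normSq (Dk m x) ≤ (m:ℝ)^2 := by
  have habs : ‖Dk m x‖ ≤ m := by
    calc ‖Dk m x‖ ≤ ∑ i ∈ Finset.range m, ‖ec x ^ i‖ := by
          rw [Dk]
          exact norm_sum_le _ _
    _ = ∑ _i ∈ Finset.range m, 1 := by
          apply Finset.sum_congr rfl
          intro i _
          rw [norm_pow, abs_ec, one_pow]
    _ = m := by simp
  rw [← Complex.sq_norm]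
  have h0 := norm_nonneg (Dk m x)
  nlinarith

lemma normSq_Dk_bad (m : ℕ) (x : ℝ) {lsq : ℝ} (hl : lsq ≤ Complex.normSq (ec x - 1)) :
    Complex.normSq (Dk m x) * lsq ≤ 4 := by
  have hgs : (Dk m x) * (ec x - 1) = ec x ^ m - 1 := geom_sum_mul (ec x) m
  have h2 : Complex.normSq (Dk m x) * Complex.normSq (ec x - 1) ≤ 4 := by
    rw [← Complex.normSq_mul, hgs]
    have habs : ‖ec x ^ m - 1‖ ≤ 2 := by
      calc ‖ec x ^ m - 1‖ ≤ ‖ec x ^ m‖ + ‖(1:ℂ)‖ :=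
            norm_sub_le _ _
      _ ≤ 2 := by rw [norm_pow, abs_ec, one_pow]; norm_num
    rw [← Complex.sq_norm]
    nlinarith [norm_nonneg (ec x ^ m - 1)]
  have h3 := Complex.normSq_nonneg (Dk m x)
  nlinarith








abbrev TT (t s m : ℕ) := Fin t → (Fin s → Fin m) × (Fin s → Fin m)

noncomputable def θz (t s m : ℕ) (a : Fin t → ℝ) (p : TT t s m) : ℝ :=
  ∑ j, (κf s m (p j) : ℝ) * a j

noncomputable def Wf (t s m : ℕ) (a : Fin t → ℝ) (n : ℕ) : ℝ :=
  ∏ j, Complex.normSq (Dk m ((n:ℝ) * a j)) ^ s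

lemma Wf_nonneg (t s m : ℕ) (a : Fin t → ℝ) (n : ℕ) : 0 ≤ Wf t s m a n :=
  Finset.prod_nonneg fun j _ => pow_nonneg (Complex.normSq_nonneg _) _

lemma key_identity (t s m : ℕ) (a : Fin t → ℝ) (n : ℕ) (c : ℝ) :
    ((Wf t s m a n : ℝ) : ℂ) * ec ((n:ℝ) * c) = ∑ p : TT t s m, ec (θz t s m a p + c) ^ n := by
  classical
  have hW0 : ((Wf t s m a n : ℝ) : ℂ) = ∑ p : TT t s m, ec ((n:ℝ) * θz t s m a p) := by
    have h1' : ((Wf t s m a n : ℝ) : ℂ)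
        = ∏ j, ((Complex.normSq (Dk m ((n:ℝ) * a j)) ^ s : ℝ) : ℂ) := by
      rw [Wf]; push_cast; rfl
    rw [h1']
    calc ∏ j, ((Complex.normSq (Dk m ((n:ℝ) * a j)) ^ s : ℝ) : ℂ)
        = ∏ j, ∑ q : (Fin s → Fin m) × (Fin s → Fin m), ec ((n:ℝ) * a j) ^ (κf s m q) :=
          Finset.prod_congr rfl fun j _ => expandA s m _
      _ = ∑ p ∈ Fintype.piFinset
            (fun _ : Fin t => (univ : Finset ((Fin s → Fin m) × (Fin s → Fin m)))),
            ∏ j, ec ((n:ℝ) * a j) ^ (κf s m (p j)) := Finset.prod_univ_sum _ _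
      _ = ∑ p : TT t s m, ec ((n:ℝ) * θz t s m a p) := by
          rw [Fintype.piFinset_univ]
          apply Finset.sum_congr rfl
          intro p _
          calc ∏ j, ec ((n:ℝ) * a j) ^ (κf s m (p j))
              = ∏ j, ec ((κf s m (p j) : ℝ) * ((n:ℝ) * a j)) :=
                Finset.prod_congr rfl fun j _ => ec_zpow _ _
            _ = ec (∑ j, (κf s m (p j) : ℝ) * ((n:ℝ) * a j)) := (ec_sum _ _).symm
            _ = ec ((n:ℝ) * θz t s m a p) := by
                congr 1
                rw [θz, Finset.mul_sum]
                exact Finset.sum_congr rfl fun j _ => by ring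
  rw [hW0, Finset.sum_mul]
  apply Finset.sum_congr rfl
  intro p _
  rw [← ec_add, ec_pow]
  congr 1
  ring

lemma tendsto_avgW (t s m : ℕ) (a : Fin t → ℝ) (c : ℝ) :
    Tendsto (fun N : ℕ => (N:ℝ)⁻¹ * ∑ n ∈ range N,
        Wf t s m a n * Real.cos (2 * Real.pi * ((n:ℝ) * c)))
      atTop (nhds ((((univ : Finset (TT t s m)).filter
        (fun p => ec (θz t s m a p + c) = 1)).card : ℝ))) := by
  classical
  have heq : ∀ N : ℕ, (N:ℂ)⁻¹ * ∑ n ∈ range N, ((Wf t s m a n : ℝ) : ℂ) * ec ((n:ℝ) * c)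
      = ∑ p : TT t s m, (N:ℂ)⁻¹ * ∑ n ∈ range N, (ec (θz t s m a p + c)) ^ n := by
    intro N
    have h1 : ∑ n ∈ range N, ((Wf t s m a n : ℝ) : ℂ) * ec ((n:ℝ) * c)
        = ∑ n ∈ range N, ∑ p : TT t s m, ec (θz t s m a p + c) ^ n :=
      Finset.sum_congr rfl fun n _ => key_identity t s m a n c
    rw [h1, Finset.sum_comm, ← Finset.mul_sum]
  have hC : Tendsto (fun N : ℕ => (N:ℂ)⁻¹ * ∑ n ∈ range N,
      ((Wf t s m a n : ℝ) : ℂ) * ec ((n:ℝ) * c)) atTop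
      (nhds (∑ p : TT t s m, if ec (θz t s m a p + c) = 1 then (1:ℂ) else 0)) := by
    apply Tendsto.congr (fun N => (heq N).symm)
    exact tendsto_finset_sum _ fun p _ => tendsto_avg_pow _ (abs_ec _)
  have hre := (Complex.continuous_re.tendsto _).comp hC
  have hval : (∑ p : TT t s m, if ec (θz t s m a p + c) = 1 then (1:ℂ) else 0).re
      = ((((univ : Finset (TT t s m)).filter
        (fun p => ec (θz t s m a p + c) = 1)).card : ℝ)) := by
    rw [Finset.sum_boole, Complex.natCast_re]
  rw [hval] at hre
  apply hre.congr
  intro N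
  show ((N:ℂ)⁻¹ * ∑ n ∈ range N, ((Wf t s m a n : ℝ) : ℂ) * ec ((n:ℝ) * c)).re = _
  have hNc : ((N:ℂ))⁻¹ = (((N:ℝ)⁻¹ : ℝ) : ℂ) := by push_cast; rfl
  rw [hNc, Complex.re_ofReal_mul, Complex.re_sum]
  congr 1
  apply Finset.sum_congr rfl
  intro n _
  rw [Complex.re_ofReal_mul, ec_re]

noncomputable def mmB (t : ℕ) (ε₀ : ℝ) : ℕ :=
  ⌈(3 * (4 / (2 - 2 * Real.cos (2 * Real.pi * ε₀))) ^ (t+1) * ((t:ℝ)+1) ^ t)⌉₊ + 1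

lemma main_lemma (t : ℕ) (a : Fin t → ℝ) (b : ℝ) (ε₀ : ℝ) (h0 : 0 < ε₀) (h1 : ε₀ ≤ 1/2)
    (hβ : ∀ n : ℕ, (∀ j, ‖(((n : ℝ) * a j : ℝ) : AddCircle (1:ℝ))‖ ≤ ε₀) →
      ‖(((n:ℝ) * b : ℝ) : AddCircle (1:ℝ))‖ ≤ 1/6) :
    ∃ k : Fin t → ℤ, (∀ j, |k j| ≤ (((t+1) * mmB t ε₀ : ℕ) : ℤ)) ∧
      ∃ z : ℤ, b = (∑ j, (k j : ℝ) * a j) + z := by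
  classical
  set lsq : ℝ := 2 - 2 * Real.cos (2 * Real.pi * ε₀) with hlsq
  set s : ℕ := t + 1 with hs
  set m : ℕ := mmB t ε₀ with hmdef
  have hl0 : 0 < lsq := by
    have := cos_eps_lt_one h0 h1
    rw [hlsq]
    linarith
  have hm1 : 1 ≤ m := by rw [hmdef, mmB]; omega
  have hmpos : (0:ℝ) < m := by exact_mod_cast hm1
  have hmX : 3 * (4 / lsq) ^ s * ((s:ℝ)) ^ t < m := by
    have hceil := Nat.le_ceil (3 * (4 / lsq) ^ (t+1) * ((t:ℝ)+1) ^ t)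
    have hlt : (⌈3 * (4 / lsq) ^ (t+1) * ((t:ℝ)+1) ^ t⌉₊ : ℝ) + 1 ≤ (m:ℝ) := by
      rw [hmdef, mmB, ← hlsq]
      push_cast
      norm_num
    have hsr : ((s:ℝ)) = (t:ℝ) + 1 := by rw [hs]; push_cast; ring
    rw [hsr, hs]
    linarith
  have hspos : (0:ℝ) < (s:ℝ) := by rw [hs]; push_cast; linarith
  set A : ℝ := (m:ℝ)^(2*s) with hA
  have hApos : 0 < A := by rw [hA]; positivity
  set cBad : ℝ := (4/lsq)^s * A^t / A with hcBad
  have hcBad0 : 0 ≤ cBad := by rw [hcBad]; positivity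
  -- bad-n bound
  have hWbad : ∀ n : ℕ, (¬ ∀ j, ‖(((n:ℝ) * a j : ℝ) : AddCircle (1:ℝ))‖ ≤ ε₀) →
      Wf t s m a n ≤ cBad := by
    intro n hn
    push_neg at hn
    obtain ⟨j, hj⟩ := hn
    have hj' : ε₀ ≤ ‖(((n:ℝ) * a j : ℝ) : AddCircle (1:ℝ))‖ := hj.le
    have htpos : 0 < t := Fin.pos j
    have hfact : Complex.normSq (Dk m ((n:ℝ) * a j)) ≤ 4 / lsq := by
      have hcos := cos_le_of_norm_ge h0 h1 hj'
      have hl : lsq ≤ Complex.normSq (ec ((n:ℝ) * a j) - 1) := by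
        rw [normSq_ec_sub_one, hlsq]
        linarith
      have hb := normSq_Dk_bad m ((n:ℝ) * a j) hl
      rw [le_div_iff₀ hl0]
      linarith
    have hsplit : Wf t s m a n = Complex.normSq (Dk m ((n:ℝ) * a j)) ^ s *
        ∏ j' ∈ univ.erase j, Complex.normSq (Dk m ((n:ℝ) * a j')) ^ s := by
      rw [Wf, ← Finset.mul_prod_erase univ _ (mem_univ j)]
    have hprod : ∏ j' ∈ univ.erase j, Complex.normSq (Dk m ((n:ℝ) * a j')) ^ s
        ≤ A^(t-1) := by
      calc ∏ j' ∈ univ.erase j, Complex.normSq (Dk m ((n:ℝ) * a j')) ^ s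
          ≤ ∏ _j' ∈ univ.erase j, ((m:ℝ)^2)^s :=
            Finset.prod_le_prod (fun _ _ => pow_nonneg (Complex.normSq_nonneg _) _)
              (fun j' _ => pow_le_pow_left₀ (Complex.normSq_nonneg _) (normSq_Dk_le m _) s)
        _ = (((m:ℝ)^2)^s)^(t-1) := by
            rw [Finset.prod_const, Finset.card_erase_of_mem (mem_univ j),
              Finset.card_univ, Fintype.card_fin]
        _ = A^(t-1) := by rw [hA, ← pow_mul, ← pow_mul]; ring_nf
    have hAt1 : A^(t-1) = A^t / A := by
      have ht' : t - 1 + 1 = t := Nat.succ_pred_eq_of_pos htpos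
      rw [eq_div_iff (ne_of_gt hApos), ← pow_succ, ht']
    have hf1 : Complex.normSq (Dk m ((n:ℝ) * a j)) ^ s ≤ (4/lsq)^s :=
      pow_le_pow_left₀ (Complex.normSq_nonneg _) hfact s
    calc Wf t s m a n = Complex.normSq (Dk m ((n:ℝ) * a j)) ^ s *
        ∏ j' ∈ univ.erase j, Complex.normSq (Dk m ((n:ℝ) * a j')) ^ s := hsplit
    _ ≤ (4/lsq)^s * A^(t-1) := by
        apply mul_le_mul hf1 hprod
          (Finset.prod_nonneg fun _ _ => pow_nonneg (Complex.normSq_nonneg _) _)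
          (pow_nonneg (div_nonneg (by norm_num) hl0.le) s)
    _ = cBad := by rw [hAt1, hcBad]; ring
  -- per-n inequality
  have hpern : ∀ n : ℕ, (1/2) * Wf t s m a n - (3/2) * cBad ≤
      Wf t s m a n * Real.cos (2 * Real.pi * ((n:ℝ) * b)) := by
    intro n
    by_cases hg : ∀ j, ‖(((n:ℝ) * a j : ℝ) : AddCircle (1:ℝ))‖ ≤ ε₀
    · have hcos := cos_ge_of_norm_le (hβ n hg)
      nlinarith [Wf_nonneg t s m a n, hcBad0,
        mul_le_mul_of_nonneg_left hcos (Wf_nonneg t s m a n)]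
    · have hWle := hWbad n hg
      have hcos := Real.neg_one_le_cos (2 * Real.pi * ((n:ℝ) * b))
      nlinarith [Wf_nonneg t s m a n,
        mul_le_mul_of_nonneg_left hcos (Wf_nonneg t s m a n)]
  -- averages
  have hSA := tendsto_avgW t s m a b
  have hSP : Tendsto (fun N : ℕ => (N:ℝ)⁻¹ * ∑ n ∈ range N, Wf t s m a n) atTop
      (nhds ((((univ : Finset (TT t s m)).filter
        (fun p => ec (θz t s m a p + 0) = 1)).card : ℝ))) := by
    apply (tendsto_avgW t s m a 0).congr
    intro N
    congr 1
    apply Finset.sum_congr rfl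
    intro n _
    rw [mul_zero, mul_zero, Real.cos_zero, mul_one]
  set cntb : ℕ := ((univ : Finset (TT t s m)).filter
    (fun p => ec (θz t s m a p + b) = 1)).card with hcntb
  set cnt0 : ℕ := ((univ : Finset (TT t s m)).filter
    (fun p => ec (θz t s m a p + 0) = 1)).card with hcnt0
  have hlimineq : (1/2) * (cnt0:ℝ) - (3/2) * cBad ≤ (cntb : ℝ) := by
    have hf : Tendsto (fun N : ℕ =>
        (1/2) * ((N:ℝ)⁻¹ * ∑ n ∈ range N, Wf t s m a n) - (3/2) * cBad)
        atTop (nhds ((1/2) * (cnt0:ℝ) - (3/2) * cBad)) :=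
      (hSP.const_mul (1/2)).sub tendsto_const_nhds
    refine le_of_tendsto_of_tendsto hf hSA ?_
    filter_upwards [eventually_ge_atTop 1] with N hN
    have hNpos : (0:ℝ) < N := by exact_mod_cast hN
    have hsum : ∑ n ∈ range N, ((1/2) * Wf t s m a n - (3/2) * cBad)
        ≤ ∑ n ∈ range N, Wf t s m a n * Real.cos (2 * Real.pi * ((n:ℝ) * b)) :=
      Finset.sum_le_sum fun n _ => hpern n
    rw [Finset.sum_sub_distrib, ← Finset.mul_sum, Finset.sum_const, Finset.card_range,
      nsmul_eq_mul] at hsum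
    have hmul := mul_le_mul_of_nonneg_left hsum (le_of_lt (inv_pos.mpr hNpos))
    calc (1/2) * ((N:ℝ)⁻¹ * ∑ n ∈ range N, Wf t s m a n) - (3/2) * cBad
        = (N:ℝ)⁻¹ * ((1/2) * ∑ n ∈ range N, Wf t s m a n - (N:ℝ) * ((3/2) * cBad)) := by
          field_simp
      _ ≤ (N:ℝ)⁻¹ * ∑ n ∈ range N, Wf t s m a n * Real.cos (2 * Real.pi * ((n:ℝ) * b)) := by
          calc (N:ℝ)⁻¹ * ((1/2) * ∑ n ∈ range N, Wf t s m a n - (N:ℝ) * ((3/2) * cBad))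
              = (N:ℝ)⁻¹ * ((1/2) * ∑ n ∈ range N, Wf t s m a n - (3/2) * cBad * (N:ℝ)) := by
                ring
            _ ≤ _ := by
                apply hmul.trans_eq'
                ring_nf
  -- count lower bound
  have hsub : ((univ : Finset (TT t s m)).filter (fun p => ∀ j, κf s m (p j) = 0)) ⊆
      ((univ : Finset (TT t s m)).filter (fun p => ec (θz t s m a p + 0) = 1)) := by
    intro p hp
    rw [Finset.mem_filter] at hp ⊢
    refine ⟨hp.1, ?_⟩
    have hz0 : θz t s m a p = 0 := by
      rw [θz]
      apply Finset.sum_eq_zero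
      intro j _
      rw [hp.2 j]
      norm_num
    rw [hz0, add_zero, ec_zero]
  have hcard1 : ((univ : Finset (TT t s m)).filter (fun p => ∀ j, κf s m (p j) = 0))
      = Fintype.piFinset (fun _ : Fin t =>
          ((univ : Finset ((Fin s → Fin m) × (Fin s → Fin m))).filter
            (fun q => κf s m q = 0))) := by
    ext p
    simp [Fintype.mem_piFinset]
  have hcardeq : ((univ : Finset (TT t s m)).filter (fun p => ∀ j, κf s m (p j) = 0)).card
      = (((univ : Finset ((Fin s → Fin m) × (Fin s → Fin m))).filter
          (fun q => κf s m q = 0)).card) ^ t := by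
    rw [hcard1, Fintype.card_piFinset]
    simp
  have hCq : ((m:ℝ)^(2*s)) / ((s:ℝ) * m) ≤
      (((univ : Finset ((Fin s → Fin m) × (Fin s → Fin m))).filter
        (fun q => κf s m q = 0)).card : ℝ) := by
    have hfe : ((univ : Finset ((Fin s → Fin m) × (Fin s → Fin m))).filter
        (fun q => κf s m q = 0))
        = ((univ : Finset ((Fin s → Fin m) × (Fin s → Fin m))).filter
          (fun q => (∑ i, ((q.1 i : ℕ))) = ∑ i, ((q.2 i : ℕ)))) := by
      apply Finset.filter_congr
      intro q _
      rw [κf, sub_eq_zero]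
      constructor
      · intro h; exact_mod_cast h
      · intro h; exact_mod_cast h
    rw [hfe]
    exact count_kernel s m (by rw [hs]; exact Nat.succ_le_succ (Nat.zero_le t)) hm1
  have hcnt0low : A^t / ((s:ℝ)*m)^t ≤ (cnt0:ℝ) := by
    have hmono := Finset.card_le_card hsub
    calc A^t / ((s:ℝ)*m)^t = (A / ((s:ℝ)*m))^t := by rw [div_pow]
    _ ≤ ((((univ : Finset ((Fin s → Fin m) × (Fin s → Fin m))).filter
          (fun q => κf s m q = 0)).card : ℝ))^t := by
        refine pow_le_pow_left₀ (div_nonneg hApos.le (by positivity)) ?_ t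
        rw [hA]
        exact hCq
    _ = ((((univ : Finset (TT t s m)).filter (fun p => ∀ j, κf s m (p j) = 0)).card : ℝ)) := by
        rw [hcardeq]
        push_cast
        ring
    _ ≤ (cnt0:ℝ) := by exact_mod_cast hmono
  -- numeric bound
  have hsm_pos : (0:ℝ) < ((s:ℝ)*m)^t := by positivity
  have hAt : (0:ℝ) < A^t := by positivity
  have hkey : 3 * (4/lsq)^s * ((s:ℝ)*m)^t < A := by
    calc 3 * (4/lsq)^s * ((s:ℝ)*m)^t
        = (3 * (4/lsq)^s * (s:ℝ)^t) * (m:ℝ)^t := by rw [mul_pow]; ring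
      _ < (m:ℝ) * (m:ℝ)^t := mul_lt_mul_of_pos_right hmX (by positivity)
      _ ≤ (m:ℝ)^(t+2) * (m:ℝ)^t := by
          have hle : (m:ℝ) ≤ (m:ℝ)^(t+2) := by
            calc (m:ℝ) = (m:ℝ)^1 := (pow_one _).symm
            _ ≤ (m:ℝ)^(t+2) := by
                exact pow_le_pow_right₀ (by exact_mod_cast hm1)
                  (Nat.succ_le_succ (Nat.zero_le _))
          exact mul_le_mul_of_nonneg_right hle (by positivity)
      _ = A := by rw [hA, ← pow_add]; congr 1; rw [hs]; ring
  have hnum : 3 * cBad < A^t / ((s:ℝ)*m)^t := by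
    have h2 : 3 * cBad = (3 * (4/lsq)^s * A^t) / A := by rw [hcBad]; ring
    rw [h2, div_lt_div_iff₀ hApos hsm_pos]
    nlinarith [mul_lt_mul_of_pos_right hkey hAt]
  have hposb : (0:ℝ) < (cntb:ℝ) := by
    have h3 : 3 * cBad < (cnt0:ℝ) := lt_of_lt_of_le hnum hcnt0low
    linarith
  -- extraction
  have hne : ((univ : Finset (TT t s m)).filter
      (fun p => ec (θz t s m a p + b) = 1)).Nonempty := by
    rw [← Finset.card_pos]
    have : 0 < cntb := by exact_mod_cast hposb
    rw [hcntb] at this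
    exact this
  obtain ⟨p, hp⟩ := hne
  rw [Finset.mem_filter] at hp
  obtain ⟨z, hz⟩ := (ec_eq_one_iff _).mp hp.2
  refine ⟨fun j => -κf s m (p j), ?_, z, ?_⟩
  · intro j
    rw [abs_neg]
    calc |κf s m (p j)| ≤ (s:ℤ) * m := abs_κf_le s m (p j)
    _ = (((t+1) * mmB t ε₀ : ℕ) : ℤ) := by rw [hs, hmdef]; push_cast; ring
  · have hθ : θz t s m a p + b = z := hz
    rw [θz] at hθ
    have hsum2 : ∑ j, ((-κf s m (p j) : ℤ) : ℝ) * a j = - ∑ j, (κf s m (p j) : ℝ) * a j := by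
      rw [← Finset.sum_neg_distrib]
      apply Finset.sum_congr rfl
      intro j _
      push_cast
      ring
    rw [hsum2]
    linarith


lemma coe_sum_circle {ι : Type*} (s : Finset ι) (f : ι → ℝ) :
    ((∑ i ∈ s, f i : ℝ) : AddCircle (1:ℝ)) = ∑ i ∈ s, ((f i : ℝ) : AddCircle (1:ℝ)) := by
  classical
  induction s using Finset.cons_induction with
  | empty => rfl
  | cons i s hi ih => rw [Finset.sum_cons, Finset.sum_cons, AddCircle.coe_add, ih]

lemma coe_nsmul_circle (n : ℕ) (x : ℝ) :
    n • ((x : ℝ) : AddCircle (1:ℝ)) = (((n:ℝ) * x : ℝ) : AddCircle (1:ℝ)) := by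
  rw [← AddCircle.coe_nsmul]
  congr 1
  rw [nsmul_eq_mul]

/-- The set `{β ∈ 𝕋 : ‖nβ‖ ≤ 1/6 for all n ∈ H_ε(α₁,…,α_t)}` is finite and contained in
`⟨α₁,…,α_t⟩_M` for some positive integer `M`. -/
theorem stmt_8 (t : ℕ) (α : Fin t → AddCircle (1 : ℝ)) (ε : ℝ) (hε : 0 < ε) :
    {β : AddCircle (1 : ℝ) |
        ∀ n : ℕ, (∀ j, ‖n • α j‖ ≤ ε) → ‖n • β‖ ≤ 1 / 6}.Finite ∧
      ∃ M : ℕ, 0 < M ∧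
        {β : AddCircle (1 : ℝ) |
            ∀ n : ℕ, (∀ j, ‖n • α j‖ ≤ ε) → ‖n • β‖ ≤ 1 / 6} ⊆
          {x : AddCircle (1 : ℝ) | ∃ k : Fin t → ℤ,
            (∀ j, |k j| ≤ (M : ℤ)) ∧ x = ∑ j, k j • α j} := by
  classical
  set ε₀ : ℝ := min ε (1/2) with hε₀def
  have h0 : 0 < ε₀ := lt_min hε (by norm_num)
  have h1 : ε₀ ≤ 1/2 := min_le_right _ _
  have hεle : ε₀ ≤ ε := min_le_left _ _
  have hlift : ∀ j, ∃ x : ℝ, ((x : ℝ) : AddCircle (1:ℝ)) = α j := by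
    intro j
    induction α j using QuotientAddGroup.induction_on with
    | H x => exact ⟨x, rfl⟩
  choose a ha using hlift
  set M : ℕ := (t+1) * mmB t ε₀ with hMdef
  have hM0 : 0 < M := by
    rw [hMdef, mmB]
    positivity
  have hsubset : ∀ β ∈ {β : AddCircle (1 : ℝ) |
      ∀ n : ℕ, (∀ j, ‖n • α j‖ ≤ ε) → ‖n • β‖ ≤ 1 / 6},
      ∃ k : Fin t → ℤ, (∀ j, |k j| ≤ (M : ℤ)) ∧ β = ∑ j, k j • α j := by
    intro β hβmem
    rw [Set.mem_setOf_eq] at hβmem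
    obtain ⟨b, hb⟩ : ∃ x : ℝ, ((x : ℝ) : AddCircle (1:ℝ)) = β := by
      induction β using QuotientAddGroup.induction_on with
      | H x => exact ⟨x, rfl⟩
    have hyp : ∀ n : ℕ, (∀ j, ‖(((n:ℝ) * a j : ℝ) : AddCircle (1:ℝ))‖ ≤ ε₀) →
        ‖(((n:ℝ) * b : ℝ) : AddCircle (1:ℝ))‖ ≤ 1/6 := by
      intro n hn
      have h2 : ∀ j, ‖n • α j‖ ≤ ε := by
        intro j
        rw [← ha j, coe_nsmul_circle]
        exact le_trans (hn j) hεle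
      have h3 := hβmem n h2
      rw [← hb, coe_nsmul_circle] at h3
      exact h3
    obtain ⟨k, hk, z, hbz⟩ := main_lemma t a b ε₀ h0 h1 hyp
    refine ⟨k, fun j => le_trans (hk j) (by rw [hMdef]), ?_⟩
    rw [← hb, hbz, AddCircle.coe_add, coe_sum_circle]
    have hz0 : (((z:ℝ) : ℝ) : AddCircle (1:ℝ)) = 0 := by
      rw [AddCircle.coe_eq_zero_iff]
      exact ⟨z, by rw [zsmul_eq_mul, mul_one]⟩
    rw [hz0, add_zero]
    apply Finset.sum_congr rfl
    intro j _
    rw [← ha j, ← AddCircle.coe_zsmul]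
    congr 1
    rw [zsmul_eq_mul]
  have hfin : {x : AddCircle (1:ℝ) | ∃ k : Fin t → ℤ,
      (∀ j, |k j| ≤ (M:ℤ)) ∧ x = ∑ j, k j • α j}.Finite := by
    have himg : {x : AddCircle (1:ℝ) | ∃ k : Fin t → ℤ,
        (∀ j, |k j| ≤ (M:ℤ)) ∧ x = ∑ j, k j • α j}
        ⊆ (fun k : Fin t → ℤ => ∑ j, k j • α j) ''
          (Set.pi Set.univ (fun _ : Fin t => Set.Icc (-(M:ℤ)) (M:ℤ))) := by
      rintro x ⟨k, hk, rfl⟩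
      refine ⟨k, ?_, rfl⟩
      intro j _
      rw [Set.mem_Icc]
      exact abs_le.mp (hk j)
    refine Set.Finite.subset (Set.Finite.image _ ?_) himg
    exact Set.Finite.pi (fun _ => Set.finite_Icc _ _)
  constructor
  · apply hfin.subset
    intro β hβ
    exact hsubset β hβ
  · exact ⟨M, hM0, fun β hβ => hsubset β hβ⟩
end

section
/- Let α₁,…,α_t ∈ 𝕋, ε > 0, M ∈ ℕ, and let V ⊇ ⟨α₁,…,α_t⟩_M be an open subset of 𝕋 such that {β ∈ 𝕋 : ‖βH_ε(α₁,…,α_t)‖ ≤ 1/6} ⊆ ⟨α₁,…,α_t⟩_M. Then there exists a positive integer N such that for all β ∈ 𝕋: if ‖nβ‖ ≤ 1/6 for all n in the finite Bohr set H_{N,ε}(α₁,…,α_t) = {n ≤ N : ‖nα_j‖ ≤ ε ∀j}, then β ∈ V. -/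
/-- If `V ⊇ ⟨α₁,…,α_t⟩_M` is open and `{β : ‖βH_ε‖ ≤ 1/6} ⊆ ⟨α₁,…,α_t⟩_M`, then
there is `N` such that `‖nβ‖ ≤ 1/6` for all `n ∈ H_{N,ε}` implies `β ∈ V`. -/
theorem stmt_9 (t : ℕ) (α : Fin t → AddCircle (1 : ℝ)) (ε : ℝ) (hε : 0 < ε)
    (M : ℕ) (V : Set (AddCircle (1 : ℝ))) (hV : IsOpen V)
    (hMV : {x : AddCircle (1 : ℝ) | ∃ k : Fin t → ℤ,
        (∀ j, |k j| ≤ (M : ℤ)) ∧ x = ∑ j, k j • α j} ⊆ V)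
    (hHM : {β : AddCircle (1 : ℝ) |
        ∀ n : ℕ, (∀ j, ‖n • α j‖ ≤ ε) → ‖n • β‖ ≤ 1 / 6} ⊆
      {x : AddCircle (1 : ℝ) | ∃ k : Fin t → ℤ,
        (∀ j, |k j| ≤ (M : ℤ)) ∧ x = ∑ j, k j • α j}) :
    ∃ N : ℕ, 0 < N ∧ ∀ β : AddCircle (1 : ℝ),
      (∀ n : ℕ, n ≤ N → (∀ j, ‖n • α j‖ ≤ ε) → ‖n • β‖ ≤ 1 / 6) → β ∈ V := by
  set Z : ℕ → Set (AddCircle (1 : ℝ)) :=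
    fun n => {β | (∀ j, ‖n • α j‖ ≤ ε) → ‖n • β‖ ≤ 1 / 6} with hZ
  have hZclosed : ∀ n, IsClosed (Z n) := by
    intro n
    by_cases h : ∀ j, ‖n • α j‖ ≤ ε
    · have : Z n = {β | ‖n • β‖ ≤ 1 / 6} := by
        ext β; simp [hZ, h]
      rw [this]
      exact isClosed_le (continuous_norm.comp (continuous_nsmul n)) continuous_const
    · have : Z n = Set.univ := by
        ext β; simp [hZ, h]
      rw [this]; exact isClosed_univ
  have hcompact : IsCompact (Vᶜ) := (hV.isClosed_compl).isCompact
  have hempty : Vᶜ ∩ ⋂ n, Z n = ∅ := by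
    ext β
    simp only [Set.mem_inter_iff, Set.mem_compl_iff, Set.mem_iInter, Set.mem_empty_iff_false,
      iff_false, not_and]
    intro hβV hβZ
    exact hβV (hMV (hHM hβZ))
  obtain ⟨u, hu⟩ := hcompact.elim_finite_subfamily_closed Z hZclosed hempty
  refine ⟨(u.sup id) + 1, Nat.succ_pos _, fun β hβ => ?_⟩
  by_contra hβV
  have : β ∈ Vᶜ ∩ ⋂ n ∈ u, Z n := by
    refine ⟨hβV, Set.mem_iInter₂.2 fun n hn => ?_⟩
    intro h
    exact hβ n (le_trans (Finset.le_sup (f := id) hn) (Nat.le_succ _)) h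
  rw [hu] at this
  exact this
end

section
/- Let G = {α_t : t ∈ ℕ} be a countable subgroup of 𝕋 and (M_t)_{t∈ℕ} a sequence of positive integers. Then there exists a sequence (V_t)_{t∈ℕ} of open subsets of 𝕋 such that (i) V_t ⊇ ⟨α₁,…,α_t⟩_{M_t} for every t, and (ii) the limes inferior ⋃_{k∈ℕ} ⋂_{t≥k} V_t equals G. -/
/-- `⟨α₁,…,α_t⟩_M`: integer combinations of the first `t` terms of `α` with
coefficients bounded by `M`. -/
def spanM (α : ℕ → AddCircle (1 : ℝ)) (t M : ℕ) : Set (AddCircle (1 : ℝ)) :=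
  {x | ∃ k : ℕ → ℤ, (∀ j, |k j| ≤ (M : ℤ)) ∧ x = ∑ j ∈ Finset.range t, k j • α j}

lemma spanM_finite (α : ℕ → AddCircle (1 : ℝ)) (t M : ℕ) : (spanM α t M).Finite := by
  classical
  have hsub : spanM α t M ⊆ Set.range
      (fun c : Fin t → (Finset.Icc (-(M:ℤ)) (M:ℤ)) => ∑ j : Fin t, ((c j : ℤ) • α j)) := by
    rintro x ⟨k, hk, rfl⟩
    refine ⟨fun j => ⟨k j, ?_⟩, ?_⟩
    · have := abs_le.mp (hk j)
      simp only [Finset.mem_Icc]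
      exact ⟨this.1, this.2⟩
    · simp only
      rw [Finset.sum_range fun i => k i • α i]
  exact (Set.finite_range _).subset hsub

lemma spanM_subset_G (G : AddSubgroup (AddCircle (1 : ℝ))) (α : ℕ → AddCircle (1 : ℝ))
    (hα : Set.range α = (G : Set (AddCircle (1 : ℝ)))) (t M : ℕ) :
    spanM α t M ⊆ (G : Set (AddCircle (1 : ℝ))) := by
  rintro x ⟨k, hk, rfl⟩
  refine AddSubgroup.sum_mem G fun j _ => AddSubgroup.zsmul_mem G ?_ _
  have : α j ∈ Set.range α := Set.mem_range_self j
  rwa [hα] at this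

lemma mem_spanM (α : ℕ → AddCircle (1 : ℝ)) {s t M : ℕ} (hst : s < t) (hM : 1 ≤ M) :
    α s ∈ spanM α t M := by
  classical
  refine ⟨fun j => if j = s then 1 else 0, fun j => ?_, ?_⟩
  · by_cases h : j = s <;> simp [h] <;> exact_mod_cast hM
  · rw [Finset.sum_eq_single s (fun b _ hb => by simp [hb]) (fun h => absurd (Finset.mem_range.mpr hst) h)]
    simp

lemma exists_sep {X : Type*} [MetricSpace X] {S : Set X} (hS : S.Finite) :
    ∃ ε : ℝ, 0 < ε ∧ ∀ x ∈ S, ∀ y ∈ S, x ≠ y → 3 * ε ≤ dist x y := by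
  classical
  set s := hS.toFinset with hs
  set T := ((s ×ˢ s).filter fun p => p.1 ≠ p.2).image fun p => dist p.1 p.2 with hT
  by_cases hTne : T.Nonempty
  · refine ⟨T.min' hTne / 3, ?_, ?_⟩
    · have hmem := T.min'_mem hTne
      simp only [hT, Finset.mem_image, Finset.mem_filter] at hmem
      obtain ⟨p, ⟨-, hne⟩, hd⟩ := hmem
      have : 0 < T.min' hTne := by rw [← hd]; exact dist_pos.mpr hne
      linarith
    · intro x hx y hy hxy
      have hmem : dist x y ∈ T := by
        simp only [hT, Finset.mem_image]
        exact ⟨(x, y), Finset.mem_filter.mpr ⟨Finset.mem_product.mpr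
          ⟨hS.mem_toFinset.mpr hx, hS.mem_toFinset.mpr hy⟩, hxy⟩, rfl⟩
      have := T.min'_le _ hmem
      linarith
  · refine ⟨1, one_pos, fun x hx y hy hxy => absurd ⟨dist x y, ?_⟩ hTne⟩
    simp only [hT, Finset.mem_image]
    exact ⟨(x, y), Finset.mem_filter.mpr ⟨Finset.mem_product.mpr
      ⟨hS.mem_toFinset.mpr hx, hS.mem_toFinset.mpr hy⟩, hxy⟩, rfl⟩

/-- For a countable subgroup `G = {α_t : t ∈ ℕ}` of `𝕋` and positive integers `(M_t)`,
there are open sets `V_t ⊇ ⟨α₁,…,α_t⟩_{M_t}` with `liminf V_t = G`. -/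
theorem stmt_10 (G : AddSubgroup (AddCircle (1 : ℝ))) (α : ℕ → AddCircle (1 : ℝ))
    (hα : Set.range α = (G : Set (AddCircle (1 : ℝ))))
    (M : ℕ → ℕ) (hM : ∀ t, 0 < M t) :
    ∃ V : ℕ → Set (AddCircle (1 : ℝ)),
      (∀ t, IsOpen (V t)) ∧ (∀ t, spanM α t (M t) ⊆ V t) ∧
        (⋃ k : ℕ, ⋂ t : ℕ, ⋂ _ : k ≤ t, V t) = (G : Set (AddCircle (1 : ℝ))) := by
  classical
  set F : ℕ → Set (AddCircle (1 : ℝ)) := fun t => spanM α t (M t) with hF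
  have hFfin : ∀ t, (F t).Finite := fun t => spanM_finite α t (M t)
  have hFG : ∀ t, F t ⊆ (G : Set (AddCircle (1 : ℝ))) := fun t => spanM_subset_G G α hα t (M t)
  have hδex : ∀ t, ∃ ε : ℝ, 0 < ε ∧ ∀ x ∈ F t ∪ F (t+1), ∀ y ∈ F t ∪ F (t+1),
      x ≠ y → 3 * ε ≤ dist x y := fun t => exists_sep ((hFfin t).union (hFfin (t+1)))
  choose δ hδpos hsep using hδex
  set ε : ℕ → ℝ := fun t => min ((Finset.range (t+1)).inf' (by simp) δ) (1/((t:ℝ)+1)) with hε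
  have hεpos : ∀ t, 0 < ε t := by
    intro t
    refine lt_min ((Finset.lt_inf'_iff _).mpr fun b _ => hδpos b) (by positivity)
  have hεδ : ∀ t, ε t ≤ δ t :=
    fun t => (min_le_left _ _).trans (Finset.inf'_le _ (Finset.self_mem_range_succ t))
  have hεone : ∀ t, ε t ≤ 1/((t:ℝ)+1) := fun t => min_le_right _ _
  have hεmono : ∀ t, ε (t+1) ≤ ε t := by
    intro t
    refine min_le_min ?_ ?_
    · exact Finset.le_inf' _ _ fun b hb => Finset.inf'_le _
        (Finset.mem_range.mpr (lt_trans (Finset.mem_range.mp hb) (Nat.lt_succ_self _)))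
    · rw [one_div, one_div]
      apply inv_anti₀
      · positivity
      · push_cast; linarith
  set V : ℕ → Set (AddCircle (1 : ℝ)) := fun t => ⋃ x ∈ F t, Metric.ball x (ε t) with hV
  refine ⟨V, fun t => isOpen_iUnion fun x => isOpen_iUnion fun _ => Metric.isOpen_ball,
    fun t y hy => Set.mem_biUnion hy (Metric.mem_ball_self (hεpos t)), ?_⟩
  apply Set.eq_of_subset_of_subset
  · intro y hy
    simp only [Set.mem_iUnion, Set.mem_iInter] at hy
    obtain ⟨k, hk⟩ := hy
    have hw : ∀ n : ℕ, ∃ x, x ∈ F (k+n) ∧ dist y x < ε (k+n) := by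
      intro n
      have := hk (k+n) (Nat.le_add_right _ _)
      simp only [hV, Set.mem_iUnion, Metric.mem_ball, exists_prop] at this
      obtain ⟨x, hx, hd⟩ := this
      exact ⟨x, hx, hd⟩
    choose x hxF hxd using hw
    have hxeq : ∀ n, x n = x 0 := by
      intro n
      induction n with
      | zero => rfl
      | succ n ih =>
        have hd1 : dist y (x n) < δ (k+n) := lt_of_lt_of_le (hxd n) (hεδ (k+n))
        have hd2 : dist y (x (n+1)) < δ (k+n) :=
          lt_of_lt_of_le (hxd (n+1)) ((hεmono (k+n)).trans (hεδ (k+n)))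
        have htri : dist (x n) (x (n+1)) < 3 * δ (k+n) := by
          have := dist_triangle (x n) y (x (n+1))
          rw [dist_comm (x n) y] at this
          have hp := hδpos (k+n)
          linarith
        by_contra hne
        have hxn1 : x (n+1) ∈ F (k+n) ∪ F (k+n+1) := Or.inr (hxF (n+1))
        have hxn : x n ∈ F (k+n) ∪ F (k+n+1) := Or.inl (hxF n)
        have hge := hsep (k+n) (x n) hxn (x (n+1)) hxn1 (fun h => hne (h ▸ ih))
        linarith
    have hy0 : y = x 0 := by
      by_contra hne
      have hpos : 0 < dist y (x 0) := dist_pos.mpr hne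
      obtain ⟨n, hn⟩ := exists_nat_one_div_lt hpos
      have h1 : dist y (x 0) < ε (k+n) := by rw [← hxeq n]; exact hxd n
      have h2 : ε (k+n) ≤ 1/((n:ℝ)+1) := by
        refine (hεone (k+n)).trans ?_
        rw [one_div, one_div]
        apply inv_anti₀
        · positivity
        · push_cast; linarith
      linarith
    rw [hy0]
    exact hFG k (hxF 0)
  · intro g hg
    have hgr : g ∈ Set.range α := by rwa [hα]
    obtain ⟨s, rfl⟩ := hgr
    simp only [Set.mem_iUnion, Set.mem_iInter]
    refine ⟨s+1, fun t ht => ?_⟩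
    have hmem : α s ∈ F t := mem_spanM α ht (hM t)
    exact Set.mem_biUnion hmem (Metric.mem_ball_self (hεpos t))
end

section
/- Let G ≤ 𝕋 be a countable subgroup, (α_t) an enumeration of G, and (δ_t) a sequence of positive reals decreasing to 0 such that for all t: (1) 2δ_t is less than the minimal distance between distinct elements of ⟨α₁,…,α_t⟩_{M_t}, and (2) δ_t + δ_{t+1} is less than the minimal distance between an element of ⟨α₁,…,α_t⟩_{M_t} and an element of ⟨α₁,…,α_{t+1}⟩_{M_{t+1}} \ ⟨α₁,…,α_t⟩_{M_t}. Define V_t := {β : ∃α ∈ ⟨α₁,…,α_t⟩_{M_t}, ‖α−β‖ < δ_t}. Then ⋃_k ⋂_{t≥k} V_t = G. -/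
lemma spanM_mem_subgroup (G : AddSubgroup (AddCircle (1 : ℝ))) (α : ℕ → AddCircle (1 : ℝ))
    (hα : Set.range α = (G : Set (AddCircle (1 : ℝ)))) (t M : ℕ) {x : AddCircle (1 : ℝ)}
    (hx : x ∈ spanM α t M) : x ∈ G := by
  obtain ⟨k, _, rfl⟩ := hx
  refine AddSubgroup.sum_mem G (fun j _ => AddSubgroup.zsmul_mem G ?_ _)
  have : α j ∈ Set.range α := ⟨j, rfl⟩
  rwa [hα] at this

lemma norm_sub_tri (a b β : AddCircle (1 : ℝ)) : ‖a - b‖ ≤ ‖a - β‖ + ‖b - β‖ := by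
  have h : a - b = (a - β) - (b - β) := by abel
  rw [h]; exact norm_sub_le _ _

/-- Given an enumeration `(α_t)` of a countable subgroup `G ≤ 𝕋`, increasing positive
`(M_t)`, and `(δ_t)` decreasing to `0` with the separation properties (1) and (2),
the sets `V_t = {β : ∃ α ∈ ⟨α₁,…,α_t⟩_{M_t}, ‖α - β‖ < δ_t}` satisfy
`⋃_k ⋂_{t ≥ k} V_t = G`. -/
theorem stmt_11 (G : AddSubgroup (AddCircle (1 : ℝ))) (α : ℕ → AddCircle (1 : ℝ))
    (hα : Set.range α = (G : Set (AddCircle (1 : ℝ))))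
    (M : ℕ → ℕ) (hMpos : ∀ t, 0 < M t) (hMmono : Monotone M)
    (δ : ℕ → ℝ) (hδpos : ∀ t, 0 < δ t) (hδanti : Antitone δ)
    (hδ0 : Filter.Tendsto δ Filter.atTop (nhds 0))
    (h1 : ∀ t, ∀ a ∈ spanM α t (M t), ∀ a' ∈ spanM α t (M t),
      a ≠ a' → 2 * δ t < ‖a - a'‖)
    (h2 : ∀ t, ∀ a ∈ spanM α t (M t),
      ∀ a' ∈ spanM α (t + 1) (M (t + 1)) \ spanM α t (M t),
        δ t + δ (t + 1) < ‖a - a'‖)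
    (V : ℕ → Set (AddCircle (1 : ℝ)))
    (hV : ∀ t, V t = {β | ∃ a ∈ spanM α t (M t), ‖a - β‖ < δ t}) :
    (⋃ k : ℕ, ⋂ t : ℕ, ⋂ _ : k ≤ t, V t) = (G : Set (AddCircle (1 : ℝ))) := by
  ext β
  simp only [Set.mem_iUnion, Set.mem_iInter, SetLike.mem_coe]
  constructor
  · rintro ⟨k, hk⟩
    have hVk : ∀ t, k ≤ t → ∃ a ∈ spanM α t (M t), ‖a - β‖ < δ t := by
      intro t ht
      have := hk t ht; rwa [hV t] at this
    obtain ⟨a, haS, ha⟩ := hVk k le_rfl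
    -- rigidity: any good approximant at level t ≥ k equals a
    have claim : ∀ t, k ≤ t → ∀ b ∈ spanM α t (M t), ‖b - β‖ < δ t → b = a := by
      intro t
      induction t with
      | zero =>
        intro h0 b hb hbβ
        have hk0 : k = 0 := Nat.le_zero.mp h0
        subst hk0
        by_contra hne
        have h := h1 0 b hb a haS hne
        have htri := norm_sub_tri b a β
        linarith
      | succ t ih =>
        intro hkt b hb hbβ
        rcases Nat.lt_or_ge k (t + 1) with hlt | hge
        · have hkt' : k ≤ t := Nat.lt_succ_iff.mp hlt
          obtain ⟨a', ha'S, ha'⟩ := hVk t hkt'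
          have hbmem : b ∈ spanM α t (M t) := by
            by_contra hnb
            have h := h2 t a' ha'S b ⟨hb, hnb⟩
            have htri := norm_sub_tri a' b β
            linarith
          exact ih hkt' b hbmem (lt_of_lt_of_le hbβ (hδanti (Nat.le_succ t)))
        · have hke : k = t + 1 := le_antisymm hkt hge
          subst hke
          by_contra hne
          have h := h1 (t + 1) b hb a haS hne
          have htri := norm_sub_tri b a β
          linarith
    have key : ∀ t, k ≤ t → ‖a - β‖ < δ t := by
      intro t ht
      obtain ⟨b, hbS, hb⟩ := hVk t ht
      have := claim t ht b hbS hb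
      rwa [this] at hb
    have hle : ‖a - β‖ ≤ 0 := by
      refine ge_of_tendsto hδ0 ?_
      filter_upwards [Filter.eventually_ge_atTop k] with t ht
      exact (key t ht).le
    have : a = β := sub_eq_zero.mp (norm_eq_zero.mp (le_antisymm hle (norm_nonneg _)))
    rw [← this]
    exact spanM_mem_subgroup G α hα k (M k) haS
  · intro hβ
    have : β ∈ Set.range α := by rw [hα]; exact hβ
    obtain ⟨s, hs⟩ := this
    refine ⟨s + 1, fun t ht => ?_⟩
    rw [hV t]
    refine ⟨β, ⟨fun j => if j = s then 1 else 0, fun j => ?_, ?_⟩, ?_⟩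
    · by_cases hj : j = s <;> simp [hj]
      exact_mod_cast hMpos t
    · rw [← hs]
      rw [Finset.sum_eq_single s]
      · simp
      · intro j _ hj; simp [hj]
      · intro hns
        exact absurd (Finset.mem_range.mpr (Nat.lt_of_succ_le ht)) hns
    · simpa using hδpos t
end

section
/- Let m ∈ ℕ, nonzero integers n₁,…,n_R, positive integers K₁,…,K_R, β ∈ 𝕋, and set S = {m + 2^l|n_i| : i ≤ R, 2^l ≤ 8K_iR}. Suppose d := sup{‖nβ‖ : n ∈ S} < 1/6. Then for each i ≤ R, ‖n_iβ‖ ≤ d/(K_iR). -/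
lemma unorm (t : ℝ) : ‖((t : ℝ) : AddCircle (1:ℝ))‖ = |t - round t| := by
  rw [AddCircle.norm_eq]; norm_num

lemma key_real (t : ℝ) (h1 : |t - round t| < 1/3) (h2 : |2*t - round (2*t)| < 1/3) :
    |2*t - round (2*t)| = 2 * |t - round t| := by
  set u : ℝ := t - round t with hu
  have h2u : (2:ℝ)*t = 2*u + 2*(round t) := by ring
  have hr : round ((2:ℝ)*t) = round (2*u) + 2*round t := by
    rw [h2u, show (2*u + 2*(round t : ℝ)) = 2*u + ((2*round t : ℤ) : ℝ) by push_cast; ring,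
      round_add_intCast]
  have heq : (2:ℝ)*t - round (2*t) = 2*u - round (2*u) := by
    rw [hr, h2u]; push_cast; ring
  rw [heq] at h2 ⊢
  set r : ℤ := round ((2:ℝ)*u) with hrdef
  have habs : |2*u - (r:ℝ)| ≤ 1/2 := abs_sub_round _
  obtain ⟨ha1, ha2⟩ := abs_le.mp habs
  obtain ⟨hb1, hb2⟩ := abs_lt.mp h1
  obtain ⟨hc1, hc2⟩ := abs_lt.mp h2
  have hr2 : (r:ℝ) < 2 := by linarith
  have hrm2 : (-2:ℝ) < r := by linarith
  have hr2' : r < 2 := by exact_mod_cast hr2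
  have hrm2' : (-2:ℤ) < r := by exact_mod_cast hrm2
  interval_cases r
  · exfalso
    push_cast at hc1 hc2
    linarith
  · push_cast
    rw [sub_zero, show (2:ℝ)*u = 2*u by ring, abs_mul, abs_two]
  · exfalso
    push_cast at hc1 hc2
    linarith

lemma key_circle (x : AddCircle (1:ℝ)) (h1 : ‖x‖ < 1/3) (h2 : ‖2 • x‖ < 1/3) :
    ‖2 • x‖ = 2 * ‖x‖ := by
  obtain ⟨t, rfl⟩ := QuotientAddGroup.mk_surjective x
  have hcoe : (2 : ℕ) • ((t : ℝ) : AddCircle (1:ℝ)) = ((2*t : ℝ) : AddCircle (1:ℝ)) := by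
    rw [two_smul, ← QuotientAddGroup.mk_add]; congr 1; ring
  rw [show ((QuotientAddGroup.mk t : AddCircle (1:ℝ))) = ((t:ℝ) : AddCircle (1:ℝ)) from rfl] at *
  rw [hcoe] at h2 ⊢
  rw [unorm, unorm] at *
  exact key_real t h1 h2

lemma iter_norm (α : AddCircle (1:ℝ)) (k : ℕ)
    (h : ∀ l ≤ k, ‖(2^l : ℕ) • α‖ < 1/3) :
    ‖(2^k : ℕ) • α‖ = 2^k * ‖α‖ := by
  induction k with
  | zero => simp
  | succ k ih =>
    have hstep : ((2:ℕ)^(k+1)) • α = 2 • ((2^k : ℕ) • α) := by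
      rw [pow_succ', mul_smul]
    rw [hstep, key_circle _ (h k (by omega)) (by rw [← hstep]; exact h (k+1) le_rfl),
      ih (fun l hl => h l (by omega)), pow_succ']
    push_cast; ring

/-- If `d < 1/6` bounds `‖nβ‖` for every `n` in
`S = {m + 2^l|n_i| : i ≤ R, 2^l ≤ 8K_iR}`, then `‖n_iβ‖ ≤ d/(K_iR)` for each `i`. -/
theorem stmt_17 (m : ℕ) (R : ℕ) (hRpos : 0 < R)
    (n : Fin R → ℤ) (hn : ∀ i, n i ≠ 0) (K : Fin R → ℕ) (hK : ∀ i, 0 < K i)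
    (β : AddCircle (1 : ℝ)) (d : ℝ) (hd0 : 0 ≤ d) (hd : d < 1 / 6)
    (hS : ∀ (i : Fin R) (l : ℕ), 2 ^ l ≤ 8 * K i * R →
      ‖(m + 2 ^ l * (n i).natAbs) • β‖ ≤ d) :
    ∀ i, ‖n i • β‖ ≤ d / (K i * R) := by
  intro i
  set N : ℕ := (n i).natAbs with hN
  set α : AddCircle (1:ℝ) := N • β with hα
  set γ : AddCircle (1:ℝ) := m • β with hγ
  set M : ℕ := 8 * K i * R with hM
  have hM8 : 8 ≤ M := by
    have := hK i
    calc 8 = 8 * 1 * 1 := by norm_num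
      _ ≤ 8 * K i * R := by
          apply Nat.mul_le_mul (Nat.mul_le_mul_left 8 (hK i)) hRpos
  set nn : ℕ := Nat.log 2 M with hnn
  have hnn3 : 3 ≤ nn := by
    exact (Nat.le_log_iff_pow_le (by norm_num) (by omega)).mpr (by norm_num; omega)
  have hpow_le : 2 ^ nn ≤ M := Nat.pow_log_le_self 2 (by omega)
  have hlt : M < 2 ^ (nn + 1) := Nat.lt_pow_succ_log_self (by norm_num) M
  -- hypothesis in the form γ + 2^l • α
  have hSl : ∀ l ≤ nn, ‖γ + (2^l : ℕ) • α‖ ≤ d := by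
    intro l hl
    have h2l : (2:ℕ)^l ≤ M := le_trans (Nat.pow_le_pow_right (by norm_num) hl) hpow_le
    have := hS i l h2l
    have hrw : (m + 2 ^ l * N) • β = γ + (2^l : ℕ) • α := by
      rw [add_smul, mul_smul]
    rwa [hrw] at this
  -- chain bound
  have hchain : ∀ l < nn, ‖(2^l : ℕ) • α‖ ≤ 2 * d := by
    intro l hl
    have h1 := hSl l (le_of_lt hl)
    have h2 := hSl (l+1) hl
    have hdiff : (γ + (2^(l+1) : ℕ) • α) - (γ + (2^l : ℕ) • α) = (2^l : ℕ) • α := by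
      have : ((2:ℕ)^(l+1)) • α = (2^l : ℕ) • α + (2^l : ℕ) • α := by
        rw [← add_nsmul]; congr 1; ring
      rw [this]; abel
    calc ‖(2^l : ℕ) • α‖ = ‖(γ + (2^(l+1) : ℕ) • α) - (γ + (2^l : ℕ) • α)‖ := by rw [hdiff]
      _ ≤ ‖γ + (2^(l+1) : ℕ) • α‖ + ‖γ + (2^l : ℕ) • α‖ := norm_sub_le _ _
      _ ≤ 2 * d := by linarith
  have hsmall : ∀ l ≤ nn - 1, ‖(2^l : ℕ) • α‖ < 1/3 := fun l hl =>
    lt_of_le_of_lt (hchain l (by omega)) (by linarith)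
  have hiter := iter_norm α (nn - 1) hsmall
  have hbound : (2:ℝ)^(nn-1) * ‖α‖ ≤ 2 * d := by
    rw [← hiter]; exact hchain (nn-1) (by omega)
  -- hence ‖α‖ ≤ d / 2^(nn-2)
  have hKR : ((K i * R : ℕ) : ℝ) ≤ 2^(nn - 2) := by
    have h1 : 8 * (K i * R) < 8 * 2 ^ (nn - 2) := by
      calc 8 * (K i * R) = M := by rw [hM]; ring
        _ < 2 ^ (nn + 1) := hlt
        _ = 8 * 2 ^ (nn - 2) := by
            rw [show nn + 1 = 3 + (nn - 2) by omega, pow_add]; norm_num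
    have h2 : K i * R < 2 ^ (nn - 2) := by omega
    have h2' : ((K i * R : ℕ) : ℝ) < ((2 ^ (nn-2) : ℕ) : ℝ) := by exact_mod_cast h2
    push_cast at h2' ⊢
    linarith
  have hKRpos : (0:ℝ) < ((K i * R : ℕ) : ℝ) := by
    have : 0 < K i * R := Nat.mul_pos (hK i) hRpos
    exact_mod_cast this
  have hpow2 : (2:ℝ)^(nn-1) = 2 * 2^(nn-2) := by
    rw [show nn - 1 = 1 + (nn - 2) by omega, pow_add]; norm_num
  have hαbound : ‖α‖ ≤ d / ((K i * R : ℕ) : ℝ) := by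
    rw [le_div_iff₀ hKRpos]
    have hp2pos : (0:ℝ) < 2^(nn-2) := by positivity
    have : ‖α‖ * 2^(nn-2) ≤ d := by
      nlinarith [norm_nonneg α]
    calc ‖α‖ * ((K i * R : ℕ) : ℝ) ≤ ‖α‖ * 2^(nn-2) :=
          mul_le_mul_of_nonneg_left hKR (norm_nonneg α)
      _ ≤ d := this
  -- finally ‖n i • β‖ = ‖α‖
  have hfin : ‖n i • β‖ = ‖α‖ := by
    rcases Int.natAbs_eq (n i) with h | h
    · rw [h, natCast_zsmul]
    · rw [h, neg_zsmul, norm_neg, natCast_zsmul]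
  rw [hfin]
  calc ‖α‖ ≤ d / ((K i * R : ℕ) : ℝ) := hαbound
    _ = d / (K i * R) := by push_cast; ring_nf
end
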